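/- Let h: ℝ^m → ℝ be convex and differentiable with L-Lipschitz continuous gradient, S ⊆ ℝ^m closed convex, x* ∈ S, and a > 0 with a² − a ≥ 0, a² − a = b² for some b ≥ 0. Given points x, z ∈ S, define y = (1 − 1/a) x + (1/a) z, z⁺ = Π_S(z − (a/L) ∇h(y)), and x⁺ = (1 − 1/a) x + (1/a) z⁺. Then a² (h(x⁺) − h(x*)) + (L/2)‖z⁺ − x*‖² ≤ b² (h(x) − h(x*)) + (L/2)‖z − x*‖². -/

import Mathlib

open Set

local notation "⟪" x ", " y "⟫" => @inner ℝ _ _ x y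

variable {F : Type*} [NormedAddCommGroup F] [InnerProductSpace ℝ F] [CompleteSpace F]

lemma line_hasDerivAt (h : F → ℝ) (hdiff : Differentiable ℝ h) (p d : F) (t : ℝ) :
    HasDerivAt (fun s : ℝ => h (p + s • d)) ⟪gradient h (p + t • d), d⟫ t := by
  have h1 : HasFDerivAt h (InnerProductSpace.toDual ℝ F (gradient h (p + t • d))) (p + t • d) :=
    hasGradientAt_iff_hasFDerivAt.mp (hdiff _).hasGradientAt
  have h2 : HasDerivAt (fun s : ℝ => p + s • d) d t := by
    simpa using ((hasDerivAt_id t).smul_const d).const_add p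
  exact h1.comp_hasDerivAt t h2

lemma convex_grad_le (h : F → ℝ) (hconv : ConvexOn ℝ Set.univ h) (hdiff : Differentiable ℝ h)
    (p w : F) : h p + ⟪gradient h p, w - p⟫ ≤ h w := by
  set φ : ℝ → ℝ := fun s => h (p + s • (w - p)) with hφdef
  have hφ : ConvexOn ℝ Set.univ φ := by
    have := hconv.comp_affineMap (AffineMap.lineMap p w)
    have heq : (h ∘ (AffineMap.lineMap p w : ℝ →ᵃ[ℝ] F)) = φ := by
      funext s
      simp [hφdef, AffineMap.lineMap_apply, add_comm]
    rw [heq] at this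
    simpa using this
  have hd := line_hasDerivAt h hdiff p (w - p) 0
  have := hφ.le_slope_of_hasDerivAt (mem_univ (0:ℝ)) (mem_univ (1:ℝ)) one_pos
    (by simpa [hφdef] using hd)
  rw [slope_def_field] at this
  simp only [hφdef] at this
  norm_num at this
  have e : ⟪gradient h p, w - p⟫ = fderiv ℝ h p w - fderiv ℝ h p p := by
    rw [← map_sub, gradient, InnerProductSpace.toDual_symm_apply]
  linarith

lemma descent_lemma (h : F → ℝ) (hdiff : Differentiable ℝ h) (L : NNReal)
    (hlip : LipschitzWith L (gradient h)) (p q : F) :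
    h q ≤ h p + ⟪gradient h p, q - p⟫ + (L : ℝ) / 2 * ‖q - p‖ ^ 2 := by
  set d := q - p with hd
  set g : ℝ → ℝ := fun t => h (p + t • d) - t * ⟪gradient h p, d⟫ - (L:ℝ)/2 * t^2 * ‖d‖^2
    with hgdef
  have hg : ∀ t : ℝ, HasDerivAt g
      (⟪gradient h (p + t • d), d⟫ - ⟪gradient h p, d⟫ - (L:ℝ) * t * ‖d‖^2) t := by
    intro t
    have h2 : HasDerivAt (fun s : ℝ => s * ⟪gradient h p, d⟫) ⟪gradient h p, d⟫ t := by
      simpa using (hasDerivAt_id t).mul_const ⟪gradient h p, d⟫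
    have h3 : HasDerivAt (fun s : ℝ => (L:ℝ)/2 * s^2 * ‖d‖^2) ((L:ℝ) * t * ‖d‖^2) t := by
      have := ((hasDerivAt_pow 2 t).const_mul ((L:ℝ)/2)).mul_const (‖d‖^2)
      exact this.congr_deriv (by simp only [Nat.cast_ofNat, show (2:ℕ) - 1 = 1 from rfl, pow_one]; ring)
    exact ((line_hasDerivAt h hdiff p d t).sub h2).sub h3
  have hgd : Differentiable ℝ g := fun t => (hg t).differentiableAt
  have hanti : AntitoneOn g (Icc (0:ℝ) 1) := by
    apply antitoneOn_of_deriv_nonpos (convex_Icc 0 1) hgd.continuous.continuousOn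
      (hgd.differentiableOn)
    intro t ht
    rw [interior_Icc] at ht
    rw [(hg t).deriv]
    have key : ⟪gradient h (p + t • d) - gradient h p, d⟫ ≤ (L:ℝ) * t * ‖d‖^2 := by
      calc ⟪gradient h (p + t • d) - gradient h p, d⟫
          ≤ ‖gradient h (p + t • d) - gradient h p‖ * ‖d‖ := real_inner_le_norm _ _
        _ ≤ ((L:ℝ) * ‖(p + t • d) - p‖) * ‖d‖ := by
            have := hlip.dist_le_mul (p + t • d) p
            rw [dist_eq_norm, dist_eq_norm] at this
            exact mul_le_mul_of_nonneg_right this (norm_nonneg d)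
        _ = (L:ℝ) * t * ‖d‖^2 := by
            rw [add_sub_cancel_left, norm_smul, Real.norm_eq_abs, abs_of_pos ht.1]
            ring
    rw [inner_sub_left] at key
    linarith
  have h01 := hanti (left_mem_Icc.mpr zero_le_one) (right_mem_Icc.mpr zero_le_one) zero_le_one
  simp only [hgdef, zero_smul, add_zero, one_smul, zero_mul, one_pow, mul_one,
    add_sub_cancel] at h01
  have hpd : p + d = q := by rw [hd]; abel
  rw [hpd] at h01
  norm_num at h01
  have e : ⟪gradient h p, d⟫ = fderiv ℝ h p d := by
    rw [gradient, InnerProductSpace.toDual_symm_apply]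
  linarith

lemma proj_var_ineq {S : Set F} (hScv : Convex ℝ S) {u zp : F} (hzp : zp ∈ S)
    (hproj : ∀ w ∈ S, ‖zp - u‖ ≤ ‖w - u‖) {w : F} (hw : w ∈ S) :
    ⟪u - zp, w - zp⟫ ≤ 0 := by
  haveI : Nonempty S := ⟨⟨zp, hzp⟩⟩
  have hbdd : BddBelow (Set.range fun v : S => ‖u - v‖) := by
    refine ⟨0, fun r hr => ?_⟩
    obtain ⟨v, rfl⟩ := hr
    exact norm_nonneg _
  have key : ‖u - zp‖ = ⨅ v : S, ‖u - v‖ := by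
    apply le_antisymm
    · exact le_ciInf fun ⟨v, hv⟩ => by
        rw [norm_sub_rev u, norm_sub_rev u v]; exact hproj v hv
    · exact ciInf_le hbdd ⟨zp, hzp⟩
  exact (norm_eq_iInf_iff_real_inner_le_zero hScv hzp).mp key w hw

theorem stmt_13 (m : ℕ) (S : Set (EuclideanSpace ℝ (Fin m)))
    (hS : S.Nonempty) (hSc : IsClosed S) (hScv : Convex ℝ S)
    (h : EuclideanSpace ℝ (Fin m) → ℝ)
    (hconv : ConvexOn ℝ Set.univ h)
    (hdiff : Differentiable ℝ h)
    (L : NNReal) (hL : 0 < (L : ℝ))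
    (hlip : LipschitzWith L (gradient h))
    (xstar : EuclideanSpace ℝ (Fin m)) (hxstar : xstar ∈ S)
    (a b : ℝ) (ha : 0 < a) (hb : 0 ≤ b) (hab : a ^ 2 - a = b ^ 2)
    (x z y zp xp : EuclideanSpace ℝ (Fin m))
    (hx : x ∈ S) (hz : z ∈ S)
    (hy : y = (1 - 1 / a) • x + (1 / a) • z)
    (hzpS : zp ∈ S)
    (hproj : ∀ w ∈ S, ‖zp - (z - (a / L) • gradient h y)‖ ≤ ‖w - (z - (a / L) • gradient h y)‖)
    (hxp : xp = (1 - 1 / a) • x + (1 / a) • zp) :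
    a ^ 2 * (h xp - h xstar) + (L / 2) * ‖zp - xstar‖ ^ 2 ≤
      b ^ 2 * (h x - h xstar) + (L / 2) * ‖z - xstar‖ ^ 2 := by
  have ha' : a ≠ 0 := ne_of_gt ha
  set g := gradient h y with hg
  -- scalar abbreviations
  set I : ℝ := ⟪g, xp - y⟫ with hI
  set J : ℝ := ⟪g, zp - z⟫ with hJ
  set X2 : ℝ := ⟪g, x - y⟫ with hX2
  set X3 : ℝ := ⟪g, xstar - y⟫ with hX3
  set P : ℝ := ⟪g, zp - xstar⟫ with hP
  set Q : ℝ := ⟪z - zp, zp - xstar⟫ with hQ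
  -- vector identity: a • (xp - y) = zp - z
  have hvec : a • (xp - y) = zp - z := by
    have e : xp - y = (1 / a) • (zp - z) := by
      rw [hxp, hy, smul_sub]; abel
    rw [e, smul_smul, mul_one_div, div_self ha', one_smul]
  have hJI : J = a * I := by rw [hJ, hI, ← hvec, real_inner_smul_right]
  have hNN : ‖zp - z‖ ^ 2 = a ^ 2 * ‖xp - y‖ ^ 2 := by
    rw [← hvec, norm_smul, Real.norm_eq_abs, mul_pow, sq_abs]
  -- descent lemma
  have D1 : h xp ≤ h y + I + (L : ℝ) / 2 * ‖xp - y‖ ^ 2 := descent_lemma h hdiff L hlip y xp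
  -- convexity
  have C2 : h y + X2 ≤ h x := convex_grad_le h hconv hdiff y x
  have C3 : h y + X3 ≤ h xstar := convex_grad_le h hconv hdiff y xstar
  -- projection variational inequality
  have P4 : a * P ≤ (L : ℝ) * Q := by
    have h0 : ⟪(z - (a / L) • g) - zp, xstar - zp⟫ ≤ 0 := by
      refine proj_var_ineq hScv hzpS ?_ hxstar
      intro w hw
      exact hproj w hw
    have hexp : ⟪(z - (a / L) • g) - zp, xstar - zp⟫
        = -Q + (a / L) * P := by
      have e1 : (z - (a / L) • g) - zp = (z - zp) - (a / L) • g := by abel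
      have e2 : xstar - zp = -(zp - xstar) := by abel
      rw [e1, e2, inner_neg_right, inner_sub_left, real_inner_smul_left, hQ, hP]
      ring
    rw [hexp] at h0
    have h1 : (a / L) * P ≤ Q := by linarith
    have h2 : (L : ℝ) * ((a / L) * P) ≤ (L : ℝ) * Q :=
      mul_le_mul_of_nonneg_left h1 (le_of_lt hL)
    have h3 : (L : ℝ) * ((a / L) * P) = a * P := by
      field_simp
    linarith
  -- vector identity giving the inner-product decomposition
  have hIden : J = (a - 1) * X2 + X3 + P := by
    have hay : a • y = (a - 1) • x + z := by
      have e1 : a * (1 - 1 / a) = a - 1 := by field_simp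
      have e2 : a * (1 / a) = 1 := by field_simp
      rw [hy, smul_add, smul_smul, smul_smul, e1, e2, one_smul]
    have v1 : (a - 1) • (x - y) + ((xstar - y) + (zp - xstar)) = zp - z := by
      have step : (a - 1) • (x - y) + ((xstar - y) + (zp - xstar))
          = ((a - 1) • x + zp) - a • y := by module
      rw [step, hay]
      abel
    rw [hJ, ← v1]
    rw [inner_add_right, inner_add_right, real_inner_smul_right, hX2, hX3, hP]
    ring
  -- norm identity
  have hNorm : ‖z - xstar‖ ^ 2 = ‖zp - z‖ ^ 2 + 2 * Q + ‖zp - xstar‖ ^ 2 := by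
    have e : z - xstar = (z - zp) + (zp - xstar) := by abel
    rw [e, norm_add_sq_real, norm_sub_rev z zp, hQ]
    try ring
  -- multiplied inequalities
  have hb2 : (0:ℝ) ≤ a ^ 2 - a := hab ▸ sq_nonneg b
  have E1 : a ^ 2 * h xp ≤ a ^ 2 * h y + a * J + (L : ℝ) / 2 * ‖zp - z‖ ^ 2 := by
    have hm := mul_le_mul_of_nonneg_left D1 (sq_nonneg a)
    have hJ2 : a * J = a ^ 2 * I := by rw [hJI]; ring
    have hN2 : (L : ℝ) / 2 * ‖zp - z‖ ^ 2 = a ^ 2 * ((L : ℝ) / 2 * ‖xp - y‖ ^ 2) := by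
      rw [hNN]; ring
    linarith [hm, hJ2, hN2]
  have M2 := mul_le_mul_of_nonneg_left C2 hb2
  have M3 := mul_le_mul_of_nonneg_left C3 (le_of_lt ha)
  have hIden2 : a * J = (a ^ 2 - a) * X2 + a * X3 + a * P := by
    rw [hIden]; ring
  have hNorm2 : (L : ℝ) / 2 * ‖z - xstar‖ ^ 2
      = (L : ℝ) / 2 * ‖zp - z‖ ^ 2 + (L : ℝ) * Q + (L : ℝ) / 2 * ‖zp - xstar‖ ^ 2 := by
    rw [hNorm]; ring
  have hbx : b ^ 2 * (h x - h xstar) = (a ^ 2 - a) * (h x - h xstar) := by rw [← hab]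
  linarith [E1, M2, M3, P4, hIden2, hNorm2, hbx]
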